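/- Let a, b, c be real with c not a non-positive integer. For all x ∈ (0,1), F(a, b, c; x) = (1-x)^{c-a-b} F(c-a, c-b, c; x) (Euler's transformation). -/

import Mathlib

open Real Finset Filter Set

noncomputable def euF (A B c : ℝ) (k l : ℕ) : ℝ :=
  (ascPochhammer ℝ k).eval A * (ascPochhammer ℝ k).eval B *
    ((ascPochhammer ℝ l).eval (c + k) * (ascPochhammer ℝ l).eval (c - A - B)) /
    (k.factorial * l.factorial)

noncomputable def euG (A B c : ℝ) (k l : ℕ) : ℝ :=
  -((k : ℝ) * (c + k - 1)) / (((k + l : ℕ) : ℝ) * (c + ((k + l : ℕ) : ℝ) - 1)) * euF A B c k l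

set_option maxHeartbeats 1000000 in
lemma eu_step (A B c : ℝ) (k l : ℕ) (hck : c + k ≠ 0) (hckl : c + k + l ≠ 0) :
    euF A B c k (l + 1)
      = ((c - A + (k + l : ℕ)) * (c - B + (k + l : ℕ)) / ((k + l : ℕ) + 1)) * euF A B c k l
        + (euG A B c (k + 1) l - euG A B c k (l + 1)) := by
  have h2 : (ascPochhammer ℝ (l + 1)).eval (c + k) =
      (c + k) * (ascPochhammer ℝ l).eval (c + k + 1) := by
    rw [ascPochhammer_succ_left]
    simp [Polynomial.eval_comp, add_comm]
  have hW : (ascPochhammer ℝ l).eval (c + k + 1) =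
      (ascPochhammer ℝ l).eval (c + k) * (c + k + l) / (c + k) := by
    rw [eq_div_iff hck, mul_comm, ← h2, ascPochhammer_succ_eval]
  have hfk : (k.factorial : ℝ) ≠ 0 := Nat.cast_ne_zero.mpr k.factorial_ne_zero
  have hfl : (l.factorial : ℝ) ≠ 0 := Nat.cast_ne_zero.mpr l.factorial_ne_zero
  have hk1 : ((k : ℝ) + 1) ≠ 0 := by positivity
  have hl1 : ((l : ℝ) + 1) ≠ 0 := by positivity
  have hkl1 : ((k : ℝ) + l + 1) ≠ 0 := by positivity
  set u := (ascPochhammer ℝ k).eval A with hu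
  set v := (ascPochhammer ℝ k).eval B with hv
  set X := (ascPochhammer ℝ l).eval (c + k) with hX
  set Y := (ascPochhammer ℝ l).eval (c - A - B) with hY
  set D : ℝ := (c + k) * (((k : ℝ) + l + 1) * ((c + k + l) * (((k : ℝ) + 1) *
      (((l : ℝ) + 1) * ((k.factorial : ℝ) * (l.factorial : ℝ)))))) with hD
  have hDne : D ≠ 0 := by
    rw [hD]
    exact mul_ne_zero hck (mul_ne_zero hkl1 (mul_ne_zero hckl (mul_ne_zero hk1
      (mul_ne_zero hl1 (mul_ne_zero hfk hfl)))))
  have e1 : euF A B c k (l + 1)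
      = u * v * X * Y * ((c + k + l) * (c - A - B + l) * ((c + k) * (((k : ℝ) + l + 1) *
          ((c + k + l) * ((k : ℝ) + 1))))) / D := by
    rw [euF, ascPochhammer_succ_eval, ascPochhammer_succ_eval, ← hu, ← hv, ← hX, ← hY, hD]
    rw [Nat.factorial_succ]
    push_cast
    rw [div_eq_div_iff (by positivity) hDne]
    ring
  have e2 : ((c - A + (k + l : ℕ)) * (c - B + (k + l : ℕ)) / ((k + l : ℕ) + 1)) * euF A B c k l
      = (c - A + ((k : ℝ) + l)) * (c - B + ((k : ℝ) + l)) * (u * v * X * Y) *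
          ((c + k) * ((c + k + l) * (((k : ℝ) + 1) * ((l : ℝ) + 1)))) / D := by
    rw [euF, ← hu, ← hv, ← hX, ← hY, hD]
    push_cast
    rw [div_mul_div_comm, div_eq_div_iff (by positivity) hDne]
    ring
  have e3 : euG A B c (k + 1) l
      = -(u * (A + k) * (v * (B + k)) * X * Y) *
          ((c + k) * ((c + k + l) * (((k : ℝ) + 1) * ((l : ℝ) + 1)))) / D := by
    rw [euG, euF, ascPochhammer_succ_eval, ascPochhammer_succ_eval, ← hu, ← hv, ← hY, hD]
    rw [show ((k : ℕ) + 1 + l) = (k + l) + 1 by omega]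
    rw [Nat.factorial_succ]
    push_cast
    rw [show c + ((k : ℝ) + 1) = c + k + 1 by ring, hW]
    rw [show c + ((k : ℝ) + (l : ℝ) + 1) - 1 = c + k + l by ring,
      show c + (k : ℝ) + 1 - 1 = c + k by ring]
    field_simp
  have e4 : euG A B c k (l + 1)
      = -((k : ℝ) * (c + k - 1) * (u * v * X * Y) * ((c + k + l) * ((c - A - B + l) *
          ((c + k) * ((k : ℝ) + 1))))) / D := by
    rw [euG, euF, ascPochhammer_succ_eval, ascPochhammer_succ_eval, ← hu, ← hv, ← hX, ← hY, hD]
    rw [show ((k : ℕ) + (l + 1)) = (k + l) + 1 by omega]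
    rw [Nat.factorial_succ]
    push_cast
    rw [show c + ((k : ℝ) + (l : ℝ) + 1) - 1 = c + k + l by ring]
    rw [div_mul_div_comm, div_eq_div_iff
      (mul_ne_zero (mul_ne_zero hkl1 hckl) (by positivity)) hDne]
    ring
  rw [e1, e2, e3, e4, ← sub_div, ← add_div]
  congr 1
  ring

lemma eu_poch_ne {c : ℝ} (hc : ∀ n : ℕ, c ≠ -(n : ℝ)) (n : ℕ) :
    (ascPochhammer ℝ n).eval c ≠ 0 := by
  intro h
  rw [ascPochhammer_eval_eq_zero_iff] at h
  obtain ⟨m, _, hm⟩ := h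
  exact hc m (by linarith)

lemma eu_saal (A B c : ℝ) (hc : ∀ n : ℕ, c ≠ -(n : ℝ)) (n : ℕ) :
    ∑ k ∈ Finset.range (n + 1), euF A B c k (n - k)
      = (ascPochhammer ℝ n).eval (c - A) * (ascPochhammer ℝ n).eval (c - B) / n.factorial := by
  have hcm : ∀ m : ℕ, c + (m : ℝ) ≠ 0 := fun m h => hc m (by linarith)
  induction n with
  | zero => simp [euF]
  | succ n ih =>
    rw [Finset.sum_range_succ]
    have key : ∀ k ∈ Finset.range (n + 1), euF A B c k (n + 1 - k)
        = ((c - A + (n : ℝ)) * (c - B + (n : ℝ)) / ((n : ℝ) + 1)) * euF A B c k (n - k)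
          + (euG A B c (k + 1) (n - k) - euG A B c k ((n - k) + 1)) := by
      intro k hk
      have hkn : k ≤ n := by simpa [Nat.lt_succ_iff] using hk
      have h1 : n + 1 - k = (n - k) + 1 := by omega
      have hckl : c + (k : ℝ) + ((n - k : ℕ) : ℝ) ≠ 0 := by
        rw [Nat.cast_sub hkn]
        have := hcm n
        intro h; apply this; linarith
      rw [h1, eu_step A B c k (n - k) (hcm k) hckl,
        show k + (n - k) = n from by omega]
    rw [Finset.sum_congr rfl key, Finset.sum_add_distrib, ← Finset.mul_sum, ih]
    have htel : ∑ k ∈ Finset.range (n + 1),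
        (euG A B c (k + 1) (n - k) - euG A B c k ((n - k) + 1))
        = euG A B c (n + 1) 0 - euG A B c 0 (n + 1) := by
      have : ∀ k ∈ Finset.range (n + 1),
          euG A B c (k + 1) (n - k) - euG A B c k ((n - k) + 1)
            = (fun j => euG A B c j (n + 1 - j)) (k + 1)
              - (fun j => euG A B c j (n + 1 - j)) k := by
        intro k hk
        have hkn : k ≤ n := by simpa [Nat.lt_succ_iff] using hk
        simp only
        rw [show n + 1 - (k + 1) = n - k from by omega, show n + 1 - k = (n - k) + 1 from by omega]
      rw [Finset.sum_congr rfl this, Finset.sum_range_sub (fun j => euG A B c j (n + 1 - j))]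
      simp
    rw [htel]
    have hg0 : euG A B c 0 (n + 1) = 0 := by simp [euG]
    have hgn : euG A B c (n + 1) 0 = -euF A B c (n + 1) 0 := by
      rw [euG]
      rw [show ((n : ℕ) + 1 + 0) = n + 1 from by omega]
      push_cast
      rw [show c + ((n : ℝ) + 1) - 1 = c + n from by ring]
      rw [neg_div, div_self (mul_ne_zero (by positivity) (hcm n)), neg_one_mul]
    rw [hg0, hgn, ascPochhammer_succ_eval, ascPochhammer_succ_eval, Nat.factorial_succ]
    push_cast
    have h1 : ((n : ℝ) + 1) ≠ 0 := by positivity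
    have h2 : (n.factorial : ℝ) ≠ 0 := Nat.cast_ne_zero.mpr n.factorial_ne_zero
    field_simp
    simp only [Nat.sub_self]
    ring

noncomputable def euT (a b c x : ℝ) (n : ℕ) : ℝ :=
  ((ascPochhammer ℝ n).eval a * (ascPochhammer ℝ n).eval b)
    / ((ascPochhammer ℝ n).eval c * (n.factorial : ℝ)) * x ^ n

noncomputable def euB (u x : ℝ) (l : ℕ) : ℝ :=
  (ascPochhammer ℝ l).eval u / (l.factorial : ℝ) * x ^ l

lemma eu_poch_split (c : ℝ) (k m : ℕ) :
    (ascPochhammer ℝ (k + m)).eval c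
      = (ascPochhammer ℝ k).eval c * (ascPochhammer ℝ m).eval (c + k) := by
  rw [← ascPochhammer_mul]
  simp [Polynomial.eval_comp]

lemma eu_coeff (a b c x : ℝ) (hc : ∀ n : ℕ, c ≠ -(n : ℝ)) (n : ℕ) :
    ∑ kl ∈ Finset.HasAntidiagonal.antidiagonal n, euT (c - a) (c - b) c x kl.1 * euB (a + b - c) x kl.2
      = euT a b c x n := by
  rw [Finset.Nat.sum_antidiagonal_eq_sum_range_succ_mk]
  have hterm : ∀ k ∈ Finset.range (n + 1),
      euT (c - a) (c - b) c x k * euB (a + b - c) x (n - k)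
        = euF (c - a) (c - b) c k (n - k) / (ascPochhammer ℝ n).eval c * x ^ n := by
    intro k hk
    have hkn : k ≤ n := by simpa [Nat.lt_succ_iff] using hk
    have hsplit := eu_poch_split c k (n - k)
    rw [Nat.add_sub_cancel' hkn] at hsplit
    have hx : x ^ n = x ^ k * x ^ (n - k) := by
      rw [← pow_add, Nat.add_sub_cancel' hkn]
    rw [euT, euB, euF, hsplit, hx,
      show c - (c - a) - (c - b) = a + b - c from by ring]
    have n1 : (ascPochhammer ℝ k).eval c ≠ 0 := eu_poch_ne hc k
    have n2 : (ascPochhammer ℝ (n - k)).eval (c + k) ≠ 0 := by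
      intro h
      rw [ascPochhammer_eval_eq_zero_iff] at h
      obtain ⟨m, _, hm⟩ := h
      exact hc (m + k) (by push_cast; linarith)
    have n3 : (k.factorial : ℝ) ≠ 0 := Nat.cast_ne_zero.mpr k.factorial_ne_zero
    have n4 : ((n - k).factorial : ℝ) ≠ 0 := Nat.cast_ne_zero.mpr (n - k).factorial_ne_zero
    field_simp
  rw [Finset.sum_congr rfl hterm, ← Finset.sum_mul, ← Finset.sum_div,
    eu_saal (c - a) (c - b) c hc n,
    show c - (c - a) = a from by ring, show c - (c - b) = b from by ring, euT]
  ring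

lemma eu_summable_ratio {f q : ℕ → ℝ} {L : ℝ} (hL : L < 1)
    (hq : Tendsto (fun n => |q n|) atTop (nhds L))
    (hrec : ∀ᶠ n in atTop, |f (n + 1)| ≤ |q n| * |f n|) :
    Summable fun n => |f n| := by
  have hL0 : 0 ≤ L := ge_of_tendsto hq (Eventually.of_forall fun n => abs_nonneg _)
  set r : ℝ := (1 + L) / 2 with hr
  have hr1 : r < 1 := by rw [hr]; linarith
  have hLr : L < r := by rw [hr]; linarith
  apply summable_of_ratio_norm_eventually_le hr1
  have hev : ∀ᶠ n in atTop, |q n| < r := hq.eventually_lt_const hLr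
  filter_upwards [hev, hrec] with n h1 h2
  rw [Real.norm_eq_abs, Real.norm_eq_abs, abs_abs, abs_abs]
  exact h2.trans (mul_le_mul_of_nonneg_right h1.le (abs_nonneg _))

lemma eu_tendsto_ratio (a c : ℝ) :
    Tendsto (fun n : ℕ => (a + n) / (c + n)) atTop (nhds 1) := by
  have hb : Tendsto (fun n : ℕ => (n : ℝ) + c) atTop atTop :=
    tendsto_atTop_add_const_right atTop c tendsto_natCast_atTop_atTop
  have h1 : Tendsto (fun n : ℕ => (n : ℝ) / (n + c) + a / (n + c)) atTop (nhds (1 + 0)) :=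
    (tendsto_natCast_div_add_atTop c).add (Tendsto.div_atTop tendsto_const_nhds hb)
  rw [add_zero] at h1
  apply h1.congr
  intro n
  rw [← add_div]
  ring_nf

lemma eu_rec (a b c x : ℝ) (hc : ∀ n : ℕ, c ≠ -(n : ℝ)) (n : ℕ) :
    euT a b c x (n + 1)
      = ((a + n) * (b + n) / ((c + n) * ((n : ℝ) + 1)) * x) * euT a b c x n := by
  have h1 : (ascPochhammer ℝ n).eval c ≠ 0 := eu_poch_ne hc n
  have h2 : c + (n : ℝ) ≠ 0 := fun h => hc n (by linarith)
  have h3 : (n.factorial : ℝ) ≠ 0 := Nat.cast_ne_zero.mpr n.factorial_ne_zero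
  have h4 : ((n : ℝ) + 1) ≠ 0 := by positivity
  rw [euT, euT, ascPochhammer_succ_eval, ascPochhammer_succ_eval, ascPochhammer_succ_eval,
    Nat.factorial_succ, pow_succ]
  push_cast
  field_simp

lemma eu_summable (a b c x : ℝ) (hc : ∀ n : ℕ, c ≠ -(n : ℝ)) (hx : |x| < 1) :
    Summable fun n => |euT a b c x n| := by
  have hcm : ∀ m : ℕ, c + (m : ℝ) ≠ 0 := fun m h => hc m (by linarith)
  apply eu_summable_ratio (q := fun n : ℕ => (a + n) * (b + n) / ((c + n) * ((n : ℝ) + 1)) * x)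
    hx (L := |x|)
  · have h1 : Tendsto (fun n : ℕ => ((a + n) / (c + n)) * ((b + n) / ((n : ℝ) + 1)) * x)
        atTop (nhds (1 * 1 * x)) := by
      refine Tendsto.mul_const x (Tendsto.mul (eu_tendsto_ratio a c) ?_)
      have := eu_tendsto_ratio b 1
      apply this.congr
      intro n
      rw [add_comm 1 (n:ℝ)]
    rw [one_mul, one_mul] at h1
    have h2 : Tendsto (fun n : ℕ => (a + n) * (b + n) / ((c + n) * ((n : ℝ) + 1)) * x)
        atTop (nhds x) := by
      apply h1.congr
      intro n
      rw [div_mul_div_comm]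
    exact (continuous_abs.tendsto x).comp h2
  · filter_upwards with n
    rw [eu_rec a b c x hc n, abs_mul]

lemma eu_binomial (u x : ℝ) (hx0 : 0 < x) (hx1 : x < 1) :
    ∑' l, euB u x l = (1 - x) ^ (-u) := by
  set r : ℝ := (1 + x) / 2 with hrdef
  have hr0 : 0 < r := by rw [hrdef]; linarith
  have hr1 : r < 1 := by rw [hrdef]; linarith
  have hxr : x < r := by rw [hrdef]; linarith
  set g' : ℕ → ℝ → ℝ := fun m y => (ascPochhammer ℝ m).eval u / (m.factorial : ℝ)
      * (m * y ^ (m - 1)) with hg'def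
  have hasd : ∀ (m : ℕ) (y : ℝ), HasDerivAt (fun z => euB u z m) (g' m y) y := by
    intro m y
    simpa [euB, hg'def] using (hasDerivAt_pow m y).const_mul
      ((ascPochhammer ℝ m).eval u / (m.factorial : ℝ))
  set M : ℕ → ℝ := fun m => (m : ℝ) * (|(ascPochhammer ℝ m).eval u| / (m.factorial : ℝ)
      * r ^ m) / r with hMdef
  have hM0 : ∀ m, 0 ≤ M m := fun m => by rw [hMdef]; positivity
  have hMsum : Summable M := by
    have key : Summable fun m => |M m| := by
      apply eu_summable_ratio (q := fun m : ℕ => (u + m) / (m : ℝ) * r) (L := r) hr1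
      · have h1 : Tendsto (fun m : ℕ => (u + m) / ((m : ℝ)) * r) atTop (nhds (1 * r)) :=
          (Tendsto.mul_const r ((eu_tendsto_ratio u 0).congr (fun n => by rw [zero_add])))
        rw [one_mul] at h1
        have h2 := (continuous_abs.tendsto r).comp h1
        rwa [abs_of_pos hr0] at h2
      · filter_upwards [eventually_ge_atTop 1] with m hm
        apply le_of_eq
        have hmR : (0:ℝ) < (m : ℝ) := by exact_mod_cast hm
        rw [abs_of_nonneg (hM0 _), abs_of_nonneg (hM0 _), hMdef]
        dsimp only
        rw [ascPochhammer_succ_eval, Nat.factorial_succ]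
        simp only [abs_mul, abs_div, Nat.abs_cast, abs_of_pos hr0]
        push_cast
        have hf : ((m.factorial : ℝ)) ≠ 0 := Nat.cast_ne_zero.mpr m.factorial_ne_zero
        have hm1 : ((m : ℝ) + 1) ≠ 0 := by positivity
        field_simp
        ring
    exact key.congr fun m => abs_of_nonneg (hM0 m)
  have hbound : ∀ (m : ℕ) (y : ℝ), y ∈ Ioo (-r) r → ‖g' m y‖ ≤ M m := by
    intro m y hy
    have hyr : |y| ≤ r := le_of_lt (abs_lt.mpr ⟨hy.1, hy.2⟩)
    rw [hg'def, hMdef]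
    dsimp only
    rw [Real.norm_eq_abs]
    cases m with
    | zero => simp
    | succ n =>
      rw [Nat.succ_sub_one]
      have hfne : (((n+1).factorial : ℝ)) ≠ 0 := Nat.cast_ne_zero.mpr (n+1).factorial_ne_zero
      have hR : (((n+1 : ℕ)) : ℝ) * (|(ascPochhammer ℝ (n+1)).eval u| / (((n+1).factorial : ℝ))
          * r ^ (n+1)) / r
          = |(ascPochhammer ℝ (n+1)).eval u| / (((n+1).factorial : ℝ))
            * ((((n+1 : ℕ)) : ℝ) * r ^ n) := by
        rw [pow_succ]
        field_simp
      rw [hR]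
      simp only [abs_mul, abs_div, Nat.abs_cast, abs_pow]
      gcongr
  -- sum of series at 0
  have hsum0 : Summable fun m => euB u 0 m := by
    apply summable_of_ne_finset_zero (s := {0})
    intro m hm
    have : m ≠ 0 := by simpa using hm
    simp [euB, zero_pow this]
  have h0mem : (0:ℝ) ∈ Ioo (-r) r := ⟨by linarith, hr0⟩
  -- differentiability of the sum
  have hS : ∀ y ∈ Ioo (-r) r,
      HasDerivAt (fun z => ∑' m, euB u z m) (∑' m, g' m y) y := by
    intro y hy
    exact hasDerivAt_tsum_of_isPreconnected hMsum isOpen_Ioo (convex_Ioo _ _).isPreconnected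
      (fun m z hz => hasd m z) hbound h0mem hsum0 hy
  -- the key series identity
  have hkey : ∀ y ∈ Ioo (-r) r,
      (1 - y) * (∑' m, g' m y) = u * ∑' m, euB u y m := by
    intro y hy
    have hphi : Summable fun m => g' m y :=
      Summable.of_norm_bounded hMsum (fun m => hbound m y hy)
    have hshift : Summable fun m => g' (m + 1) y := by
      rw [← summable_nat_add_iff 1] at hphi
      exact hphi
    have hchi : Summable fun m => y * g' m y := hphi.mul_left y
    have e1 : ∑' m, g' m y = ∑' m, g' (m + 1) y := by
      rw [Summable.tsum_eq_zero_add hphi]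
      simp [hg'def]
    have e2 : ∀ m : ℕ, g' (m + 1) y
        = (ascPochhammer ℝ m).eval u / (m.factorial : ℝ) * ((u + m) * y ^ m) := by
      intro m
      rw [hg'def]
      dsimp only
      rw [Nat.succ_sub_one, ascPochhammer_succ_eval, Nat.factorial_succ]
      have h1 : ((m : ℝ) + 1) ≠ 0 := by positivity
      have h2 : ((m.factorial : ℝ)) ≠ 0 := Nat.cast_ne_zero.mpr m.factorial_ne_zero
      push_cast
      field_simp
    have e3 : ∀ m : ℕ, y * g' m y = (m : ℝ) * euB u y m := by
      intro m
      rw [hg'def, euB]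
      cases m with
      | zero => simp
      | succ n =>
        dsimp only
        rw [Nat.succ_sub_one, pow_succ]
        push_cast
        ring
    have hchi' : Summable fun m : ℕ => (m : ℝ) * euB u y m := by
      apply hchi.congr
      intro m
      exact e3 m
    calc (1 - y) * (∑' m, g' m y)
        = (∑' m, g' m y) - y * (∑' m, g' m y) := by ring
      _ = (∑' m, g' (m + 1) y) - ∑' m, y * g' m y := by rw [← e1, tsum_mul_left]
      _ = (∑' m, g' (m + 1) y) - ∑' m : ℕ, (m : ℝ) * euB u y m := by
          congr 1
          exact tsum_congr e3
      _ = ∑' m : ℕ, (g' (m + 1) y - (m : ℝ) * euB u y m) := (Summable.tsum_sub hshift hchi').symm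
      _ = ∑' m, u * euB u y m := by
          apply tsum_congr
          intro m
          rw [e2 m, euB]
          ring
      _ = u * ∑' m, euB u y m := tsum_mul_left
  -- h has zero derivative on the interval
  have hder : ∀ y ∈ Ioo (-r) r,
      HasDerivAt (fun z => (1 - z) ^ u * ∑' m, euB u z m) 0 y := by
    intro y hy
    have hy1 : (0:ℝ) < 1 - y := by
      have := hy.2
      linarith
    have H1 : HasDerivAt (fun z : ℝ => (1 - z) ^ u) (-1 * u * (1 - y) ^ (u - 1)) y := by
      have hid : HasDerivAt (fun z : ℝ => 1 - z) (-1) y := by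
        simpa using (hasDerivAt_id y).const_sub 1
      simpa using hid.rpow_const (Or.inl (ne_of_gt hy1))
    have H := H1.mul (hS y hy)
    have hval : -1 * u * (1 - y) ^ (u - 1) * (∑' m, euB u y m)
        + (1 - y) ^ u * (∑' m, g' m y) = 0 := by
      have hru : (1 - y) ^ u = (1 - y) ^ (u - 1) * (1 - y) := by
        rw [← Real.rpow_add_one (ne_of_gt hy1)]
        norm_num
      rw [hru]
      linear_combination (1 - y) ^ (u - 1) * hkey y hy
    rwa [hval] at H
  -- conclude via the mean value theorem
  have hsub : Icc (0:ℝ) x ⊆ Ioo (-r) r := by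
    intro y hy
    exact ⟨by linarith [hy.1], by linarith [hy.2]⟩
  have hcont : ContinuousOn (fun z => (1 - z) ^ u * ∑' m, euB u z m) (Icc 0 x) :=
    fun y hy => ((hder y (hsub hy)).continuousAt).continuousWithinAt
  have hconst := constant_of_has_deriv_right_zero hcont
    (fun y hy => (hder y (hsub (Ico_subset_Icc_self hy))).hasDerivWithinAt)
    x (right_mem_Icc.mpr (le_of_lt hx0))
  have hS0 : ∑' m, euB u 0 m = 1 := by
    rw [tsum_eq_single 0]
    · simp [euB]
    · intro m hm
      simp [euB, zero_pow hm]
  rw [hS0] at hconst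
  simp only [sub_zero, Real.one_rpow, mul_one] at hconst
  have hA : (1 - x) ^ u ≠ 0 := (Real.rpow_pos_of_pos (by linarith) u).ne'
  have hmain : (1 - x) ^ u * ∑' l, euB u x l = (1 - x) ^ u * (1 - x) ^ (-u) := by
    rw [hconst, ← Real.rpow_add (by linarith : (0:ℝ) < 1 - x), add_neg_cancel, Real.rpow_zero]
  exact mul_left_cancel₀ hA hmain

lemma eu_B_as_T (u x : ℝ) (l : ℕ) : euT u 1 1 x l = euB u x l := by
  rw [euT, euB, ascPochhammer_eval_one]
  rw [mul_div_mul_right _ _ (Nat.cast_ne_zero.mpr l.factorial_ne_zero : (l.factorial : ℝ) ≠ 0)]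

/-- The Gauss hypergeometric function, defined by its power series. -/
noncomputable def hypF (a b c x : ℝ) : ℝ :=
  ∑' n : ℕ, ((ascPochhammer ℝ n).eval a * (ascPochhammer ℝ n).eval b)
      / ((ascPochhammer ℝ n).eval c * (n.factorial : ℝ)) * x ^ n

theorem stmt_7 (a b c : ℝ) (hc : ∀ n : ℕ, c ≠ -(n : ℝ))
    (x : ℝ) (hx : x ∈ Set.Ioo (0 : ℝ) 1) :
    hypF a b c x = (1 - x) ^ (c - a - b) * hypF (c - a) (c - b) c x := by
  obtain ⟨hx0, hx1⟩ := hx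
  have hxabs : |x| < 1 := by rw [abs_of_pos hx0]; exact hx1
  have hc1 : ∀ n : ℕ, (1 : ℝ) ≠ -(n : ℝ) := by
    intro n h
    have : (0:ℝ) ≤ (n : ℝ) := n.cast_nonneg
    linarith
  have hsumT : Summable fun n => ‖euT (c - a) (c - b) c x n‖ := by
    simpa [Real.norm_eq_abs] using eu_summable (c - a) (c - b) c x hc hxabs
  have hsumB : Summable fun n => ‖euB (a + b - c) x n‖ := by
    have h := eu_summable (a + b - c) 1 1 x hc1 hxabs
    simp only [Real.norm_eq_abs]
    exact h.congr fun l => by rw [eu_B_as_T]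
  have hhyp1 : hypF a b c x = ∑' n, euT a b c x n := rfl
  have hhyp2 : hypF (c - a) (c - b) c x = ∑' n, euT (c - a) (c - b) c x n := rfl
  have hbin : (1 - x) ^ (c - a - b) = ∑' l, euB (a + b - c) x l := by
    rw [show c - a - b = -(a + b - c) from by ring]
    exact (eu_binomial (a + b - c) x hx0 hx1).symm
  rw [hhyp1, hhyp2, hbin, mul_comm,
    tsum_mul_tsum_eq_tsum_sum_antidiagonal_of_summable_norm hsumT hsumB]
  exact (tsum_congr (eu_coeff a b c x hc)).symm
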